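/- Let a group G act by isometries on an ℝ-tree T. Then every stable subtree of T is contained in a unique maximal stable subtree, i.e., a stable subtree that is not properly contained in any other stable subtree. -/

import Mathlib

/-- An *arc* from `x` to `y` in a metric space: the image of a topological embedding of a
closed real interval `[a,b]` (with `a = b` allowed) sending `a` to `x` and `b` to `y`.
Since `[a,b]` is compact and a metric space is Hausdorff, a topological embedding is the
same as a continuous injective map. -/
def IsArcIn {T : Type*} [MetricSpace T] (x y : T) (S : Set T) : Prop :=
  ∃ a b : ℝ, a ≤ b ∧ ∃ α : ℝ → T,
    ContinuousOn α (Set.Icc a b) ∧ Set.InjOn α (Set.Icc a b) ∧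
    α '' Set.Icc a b = S ∧ α a = x ∧ α b = y

/-- A *geodesic segment* from `x` to `y`: the image of an isometric embedding of a closed
real interval sending the endpoints to `x` and `y`. -/
def IsGeodesicSegmentIn {T : Type*} [MetricSpace T] (x y : T) (S : Set T) : Prop :=
  ∃ a b : ℝ, a ≤ b ∧ ∃ α : ℝ → T,
    (∀ s ∈ Set.Icc a b, ∀ t ∈ Set.Icc a b, dist (α s) (α t) = |s - t|) ∧
    α '' Set.Icc a b = S ∧ α a = x ∧ α b = y

/-- An ℝ-tree: a metric space in which any two points are joined by a unique arc,
and this arc is a geodesic segment. -/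
def IsRTree (T : Type*) [MetricSpace T] : Prop :=
  ∀ x y : T, (∃! S : Set T, IsArcIn x y S) ∧
    ∀ S : Set T, IsArcIn x y S → IsGeodesicSegmentIn x y S

/-- The Gromov product `(x·y)_w = (d(w,x) + d(w,y) − d(x,y))/2`. -/
noncomputable def gromovProd {T : Type*} [MetricSpace T] (w x y : T) : ℝ :=
  (dist w x + dist w y - dist x y) / 2

/-- A subset of an ℝ-tree is *nondegenerate* if it contains more than one point. -/
def Nondegenerate {T : Type*} (S : Set T) : Prop :=
  ∃ x ∈ S, ∃ y ∈ S, x ≠ y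

/-- The pointwise stabilizer `Fix(S) = {g : G | g·x = x for all x ∈ S}` of a subset of an
ℝ-tree under an isometric action `ρ`. -/
def fixOf {G T : Type*} [Group G] [MetricSpace T] (ρ : G →* (T ≃ᵢ T)) (S : Set T) :
    Set G :=
  {g : G | ∀ x ∈ S, ρ g x = x}

/-- A *stable subtree* for the action `ρ`: a nondegenerate subtree (nonempty connected
subset with more than one point) `S` such that every nondegenerate subtree of `S` has the
same pointwise stabilizer as `S`. -/
def IsStableSubtree {G T : Type*} [Group G] [MetricSpace T] (ρ : G →* (T ≃ᵢ T))
    (S : Set T) : Prop :=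
  IsConnected S ∧ Nondegenerate S ∧
    ∀ S' : Set T, S' ⊆ S → IsConnected S' → Nondegenerate S' → fixOf ρ S' = fixOf ρ S

open Set Metric

namespace RTreeAux

variable {T : Type*} [MetricSpace T]

noncomputable def seg (h : IsRTree T) (x y : T) : Set T :=
  ((h x y).1.exists).choose

lemma seg_isArc (h : IsRTree T) (x y : T) : IsArcIn x y (seg h x y) :=
  ((h x y).1.exists).choose_spec

lemma seg_eq (h : IsRTree T) {x y : T} {S : Set T} (hS : IsArcIn x y S) : S = seg h x y :=
  (h x y).1.unique hS (seg_isArc h x y)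

lemma seg_isGeo (h : IsRTree T) (x y : T) : IsGeodesicSegmentIn x y (seg h x y) :=
  (h x y).2 _ (seg_isArc h x y)

lemma seg_geo (h : IsRTree T) (x y : T) :
    ∃ a b : ℝ, a ≤ b ∧ ∃ α : ℝ → T,
      (∀ s ∈ Icc a b, ∀ t ∈ Icc a b, dist (α s) (α t) = |s - t|) ∧
      α '' Icc a b = seg h x y ∧ α a = x ∧ α b = y ∧ b - a = dist x y ∧
      InjOn α (Icc a b) ∧ ContinuousOn α (Icc a b) := by
  obtain ⟨a, b, hab, α, hd, him, hea, heb⟩ := seg_isGeo h x y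
  have hba : b - a = dist x y := by
    have := hd a ⟨le_rfl, hab⟩ b ⟨hab, le_rfl⟩
    rw [hea, heb] at this
    rw [this, abs_of_nonpos (by linarith)]; ring
  have hinj : InjOn α (Icc a b) := by
    intro s hs t ht he
    have := hd s hs t ht
    rw [he, dist_self] at this
    have h0 : |s - t| = 0 := this.symm
    have := abs_eq_zero.mp h0
    linarith [sub_eq_zero.mp this]
  have hcont : ContinuousOn α (Icc a b) := by
    refine (LipschitzOnWith.of_dist_le_mul (K := 1) ?_).continuousOn
    intro s hs t ht
    rw [hd s hs t ht, NNReal.coe_one, one_mul, Real.dist_eq]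
  exact ⟨a, b, hab, α, hd, him, hea, heb, hba, hinj, hcont⟩

lemma left_mem_seg (h : IsRTree T) (x y : T) : x ∈ seg h x y := by
  obtain ⟨a, b, hab, α, _, him, hea, _, _, _, _⟩ := seg_geo h x y
  rw [← him]; exact ⟨a, ⟨le_rfl, hab⟩, hea⟩

lemma right_mem_seg (h : IsRTree T) (x y : T) : y ∈ seg h x y := by
  obtain ⟨a, b, hab, α, _, him, _, heb, _, _, _⟩ := seg_geo h x y
  rw [← him]; exact ⟨b, ⟨hab, le_rfl⟩, heb⟩

lemma dist_add_of_mem_seg (h : IsRTree T) {x y z : T} (hz : z ∈ seg h x y) :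
    dist x z + dist z y = dist x y := by
  obtain ⟨a, b, hab, α, hd, him, hea, heb, hba, _, _⟩ := seg_geo h x y
  rw [← him] at hz
  obtain ⟨t, ht, rfl⟩ := hz
  have h1 := hd a ⟨le_rfl, hab⟩ t ht
  have h2 := hd t ht b ⟨hab, le_rfl⟩
  rw [hea] at h1; rw [heb] at h2
  have e1 : |a - t| = t - a := by rw [abs_of_nonpos (by linarith [ht.1])]; ring
  have e2 : |t - b| = b - t := by rw [abs_of_nonpos (by linarith [ht.2])]; ring
  rw [h1, h2, e1, e2, ← hba]; ring

lemma seg_self (h : IsRTree T) (x : T) : seg h x x = {x} := by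
  refine (seg_eq h ?_).symm
  refine ⟨0, 0, le_rfl, fun _ => x, continuousOn_const, ?_, ?_, rfl, rfl⟩
  · intro s hs t ht _
    simp only [Icc_self, mem_singleton_iff] at hs ht
    rw [hs, ht]
  · simp [Icc_self]

lemma seg_isConnected (h : IsRTree T) (x y : T) : IsConnected (seg h x y) := by
  obtain ⟨a, b, hab, α, _, him, _, _, _, _, hcont⟩ := seg_geo h x y
  rw [← him]
  exact (isConnected_Icc hab).image α hcont

/-- Key concatenation lemma: first-meeting-point construction. -/
lemma exists_concat (h : IsRTree T) {u w v : T} {α β : ℝ → T} {a₁ b₁ a₂ b₂ : ℝ}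
    (hab₁ : a₁ ≤ b₁) (hc₁ : ContinuousOn α (Icc a₁ b₁)) (hi₁ : InjOn α (Icc a₁ b₁))
    (he₁ : α a₁ = u) (he₁' : α b₁ = w)
    (hab₂ : a₂ ≤ b₂) (hc₂ : ContinuousOn β (Icc a₂ b₂)) (hi₂ : InjOn β (Icc a₂ b₂))
    (he₂ : β a₂ = w) (he₂' : β b₂ = v) :
    ∃ t₀ ∈ Icc a₁ b₁, ∃ s₀ ∈ Icc a₂ b₂, α t₀ = β s₀ ∧
      seg h u v = α '' Icc a₁ t₀ ∪ β '' Icc s₀ b₂ := by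
  classical
  set K := β '' Icc a₂ b₂ with hK
  have hKc : IsCompact K := isCompact_Icc.image_of_continuousOn hc₂
  set E := Icc a₁ b₁ ∩ α ⁻¹' K with hE
  have hEc : IsClosed E := hc₁.preimage_isClosed_of_isClosed isClosed_Icc hKc.isClosed
  have hEne : E.Nonempty := ⟨b₁, ⟨hab₁, le_rfl⟩, ⟨a₂, ⟨le_rfl, hab₂⟩, by rw [he₂, he₁']⟩⟩
  have hbdd : BddBelow E := ⟨a₁, fun t ht => ht.1.1⟩
  set t₀ := sInf E with ht₀def
  have ht₀E : t₀ ∈ E := hEc.csInf_mem hEne hbdd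
  have ht₀min : ∀ t ∈ E, t₀ ≤ t := fun t ht => csInf_le hbdd ht
  have ht₀I : t₀ ∈ Icc a₁ b₁ := ht₀E.1
  obtain ⟨s₀, hs₀I, hs₀e⟩ := ht₀E.2
  -- hs₀e : β s₀ = α t₀
  refine ⟨t₀, ht₀I, s₀, hs₀I, hs₀e.symm, ?_⟩
  set αc : ℝ → T := fun t => α (max a₁ (min t₀ t)) with hαc
  set βc : ℝ → T := fun s => β (max s₀ (min b₂ s)) with hβc
  set e := t₀ + (b₂ - s₀) with hedef
  have ht₀e : t₀ ≤ e := by have := hs₀I.2; linarith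
  have hae : a₁ ≤ e := le_trans ht₀I.1 ht₀e
  set δ : ℝ → T := fun t => if t ≤ t₀ then αc t else βc (t - t₀ + s₀) with hδ
  have hαc_eq : ∀ t ∈ Icc a₁ t₀, αc t = α t := by
    intro t ht
    simp only [hαc, min_eq_right ht.2, max_eq_right ht.1]
  have hβc_eq : ∀ s ∈ Icc s₀ b₂, βc s = β s := by
    intro s hs
    simp only [hβc, min_eq_right hs.2, max_eq_right hs.1]
  have hαc_cont : Continuous αc := by
    refine hc₁.comp_continuous (continuous_const.max (continuous_const.min continuous_id)) ?_
    intro t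
    constructor
    · exact le_max_left _ _
    · exact max_le hab₁ (le_trans (min_le_left _ _) ht₀I.2)
  have hβc_cont : Continuous βc := by
    refine hc₂.comp_continuous (continuous_const.max (continuous_const.min continuous_id)) ?_
    intro s
    constructor
    · exact le_trans hs₀I.1 (le_max_left _ _)
    · exact max_le hs₀I.2 (min_le_left _ _)
  have hδcont : Continuous δ := by
    refine Continuous.if_le hαc_cont (hβc_cont.comp ((continuous_id.sub continuous_const).add continuous_const)) continuous_id
      continuous_const ?_
    intro t ht
    show αc t = βc (t - t₀ + s₀)
    rw [ht]
    rw [hαc_eq t₀ ⟨ht₀I.1, le_rfl⟩]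
    simp only [sub_self, zero_add]
    rw [hβc_eq s₀ ⟨le_rfl, hs₀I.2⟩, hs₀e]
  -- arguments of the β-branch
  have harg : ∀ t, t₀ < t → t ≤ e → (t - t₀ + s₀) ∈ Icc s₀ b₂ := by
    intro t h1 h2
    constructor <;> [linarith; linarith]
  have hδβ : ∀ t, t₀ < t → t ≤ e → δ t = β (t - t₀ + s₀) := by
    intro t h1 h2
    simp only [hδ, if_neg (not_le.mpr h1)]
    exact hβc_eq _ (harg t h1 h2)
  have hδα : ∀ t ∈ Icc a₁ t₀, δ t = α t := by
    intro t ht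
    simp only [hδ, if_pos ht.2]
    exact hαc_eq t ht
  -- injectivity
  have hIccsub : Icc a₁ t₀ ⊆ Icc a₁ b₁ := Icc_subset_Icc le_rfl ht₀I.2
  have hmix : ∀ t t', t ∈ Icc a₁ e → t' ∈ Icc a₁ e → t ≤ t₀ → t₀ < t' → δ t = δ t' → False := by
    intro t t' ht ht' h1 h2 heq
    rw [hδα t ⟨ht.1, h1⟩, hδβ t' h2 ht'.2] at heq
    have hs'I : t' - t₀ + s₀ ∈ Icc s₀ b₂ := harg t' h2 ht'.2
    have hs'I2 : t' - t₀ + s₀ ∈ Icc a₂ b₂ := Icc_subset_Icc hs₀I.1 le_rfl hs'I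
    have htE : t ∈ E := ⟨⟨ht.1, le_trans h1 ht₀I.2⟩, ⟨t' - t₀ + s₀, hs'I2, heq.symm⟩⟩
    have htt₀ : t = t₀ := le_antisymm h1 (ht₀min t htE)
    have : t' - t₀ + s₀ = s₀ := by
      refine hi₂ hs'I2 hs₀I ?_
      rw [← heq, htt₀, ← hs₀e]
    linarith
  have hδinj : InjOn δ (Icc a₁ e) := by
    intro t ht t' ht' heq
    by_cases h1 : t ≤ t₀ <;> by_cases h2 : t' ≤ t₀
    · have := hi₁ (hIccsub ⟨ht.1, h1⟩) (hIccsub ⟨ht'.1, h2⟩)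
      rw [← hδα t ⟨ht.1, h1⟩, ← hδα t' ⟨ht'.1, h2⟩] at this
      exact this heq
    · exact absurd heq (fun heq => (hmix t t' ht ht' h1 (not_le.mp h2) heq).elim)
    · exact absurd heq.symm (fun heq => (hmix t' t ht' ht h2 (not_le.mp h1) heq).elim)
    · push_neg at h1 h2
      have e1 := hδβ t h1 ht.2
      have e2 := hδβ t' h2 ht'.2
      rw [e1, e2] at heq
      have := hi₂ (Icc_subset_Icc hs₀I.1 le_rfl (harg t h1 ht.2))
        (Icc_subset_Icc hs₀I.1 le_rfl (harg t' h2 ht'.2)) heq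
      linarith
  -- endpoints
  have hδa₁ : δ a₁ = u := by rw [hδα a₁ ⟨le_rfl, ht₀I.1⟩, he₁]
  have hδe : δ e = v := by
    by_cases hc : e ≤ t₀
    · have het : e = t₀ := le_antisymm hc ht₀e
      have hsb : s₀ = b₂ := by simp only [hedef] at het; linarith
      rw [hδα e ⟨hae, hc⟩, het, ← hs₀e, hsb, he₂']
    · push_neg at hc
      rw [hδβ e hc le_rfl]
      have : e - t₀ + s₀ = b₂ := by simp only [hedef]; ring
      rw [this, he₂']
  -- image
  have himage : δ '' Icc a₁ e = α '' Icc a₁ t₀ ∪ β '' Icc s₀ b₂ := by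
    apply Subset.antisymm
    · rintro z ⟨t, ht, rfl⟩
      by_cases h1 : t ≤ t₀
      · left
        exact ⟨t, ⟨ht.1, h1⟩, (hδα t ⟨ht.1, h1⟩).symm⟩
      · right
        push_neg at h1
        exact ⟨t - t₀ + s₀, harg t h1 ht.2, (hδβ t h1 ht.2).symm⟩
    · rintro z (⟨t, ht, rfl⟩ | ⟨s, hs, rfl⟩)
      · exact ⟨t, ⟨ht.1, le_trans ht.2 ht₀e⟩, hδα t ht⟩
      · refine ⟨s - s₀ + t₀, ⟨le_trans ht₀I.1 (by linarith [hs.1]), by linarith [hs.2]⟩, ?_⟩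
        by_cases hc : s - s₀ + t₀ ≤ t₀
        · have hss : s = s₀ := le_antisymm (by linarith) hs.1
          rw [hδα _ ⟨le_trans ht₀I.1 (by linarith [hs.1]), hc⟩]
          have : s - s₀ + t₀ = t₀ := by rw [hss]; ring
          rw [this, ← hs₀e, hss]
        · push_neg at hc
          rw [hδβ _ hc (by linarith [hs.2])]
          congr 1
          ring
  have harc : IsArcIn u v (δ '' Icc a₁ e) :=
    ⟨a₁, e, hae, δ, hδcont.continuousOn, hδinj, rfl, hδa₁, hδe⟩
  rw [← seg_eq h harc, himage]

lemma seg_subset_union (h : IsRTree T) (u w v : T) :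
    seg h u v ⊆ seg h u w ∪ seg h w v := by
  obtain ⟨a₁, b₁, hab₁, α, hc₁, hi₁, him₁, he₁, he₁'⟩ := seg_isArc h u w
  obtain ⟨a₂, b₂, hab₂, β, hc₂, hi₂, him₂, he₂, he₂'⟩ := seg_isArc h w v
  obtain ⟨t₀, ht₀, s₀, hs₀, _, heq⟩ :=
    exists_concat h hab₁ hc₁ hi₁ he₁ he₁' hab₂ hc₂ hi₂ he₂ he₂'
  rw [heq]
  apply union_subset_union
  · rw [← him₁]; exact image_mono (f := α) (Icc_subset_Icc le_rfl ht₀.2)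
  · rw [← him₂]; exact image_mono (f := β) (Icc_subset_Icc hs₀.1 le_rfl)

lemma mem_seg_of_dist (h : IsRTree T) {x y z : T}
    (hd : dist x z + dist z y = dist x y) : z ∈ seg h x y := by
  obtain ⟨a₁, b₁, hab₁, α, hg₁, him₁, he₁, he₁', _, hi₁, hc₁⟩ := seg_geo h x z
  obtain ⟨a₂, b₂, hab₂, β, hg₂, him₂, he₂, he₂', _, hi₂, hc₂⟩ := seg_geo h z y
  obtain ⟨t₀, ht₀, s₀, hs₀, hms, heq⟩ :=
    exists_concat h hab₁ hc₁ hi₁ he₁ he₁' hab₂ hc₂ hi₂ he₂ he₂'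
  set m := α t₀ with hm
  have hm1 : m ∈ seg h x z := him₁ ▸ mem_image_of_mem α ht₀
  have hm2 : m ∈ seg h z y := by rw [hms]; exact him₂ ▸ mem_image_of_mem β hs₀
  have d1 := dist_add_of_mem_seg h hm1
  have d2 := dist_add_of_mem_seg h hm2
  have htri := dist_triangle x m y
  have hcm : dist m z = dist z m := dist_comm m z
  have hnn := dist_nonneg (x := z) (y := m)
  have hzm : dist z m = 0 := by linarith
  have hmz : m = z := (dist_eq_zero.mp hzm).symm
  rw [heq]
  exact Or.inl ⟨t₀, ⟨ht₀.1, le_rfl⟩, hmz⟩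

lemma seg_subset_of_preconnected (h : IsRTree T) {C : Set T} (hC : IsPreconnected C)
    {x y : T} (hx : x ∈ C) (hy : y ∈ C) : seg h x y ⊆ C := by
  intro p hp
  by_contra hpC
  have hdp : ∀ z ∈ C, 0 < dist p z := by
    intro z hz
    rw [dist_pos]
    rintro rfl; exact hpC hz
  have prop₁ : ∀ z w : T, dist z w < dist p z → p ∉ seg h x z → p ∉ seg h x w := by
    intro z w hw hpz hpw
    rcases seg_subset_union h x z w hpw with h1 | h2
    · exact hpz h1
    · have := dist_add_of_mem_seg h h2
      have := dist_comm z p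
      have := dist_nonneg (x := p) (y := w)
      linarith
  have prop₂ : ∀ z w : T, dist z w < dist p z → p ∈ seg h x z → p ∈ seg h x w := by
    intro z w hw hpz
    rcases seg_subset_union h x w z hpz with h1 | h2
    · exact h1
    · exfalso
      have := dist_add_of_mem_seg h h2
      have := dist_comm w z
      have := dist_nonneg (x := w) (y := p)
      linarith
  classical
  set U : Set T := ⋃ (z : T) (_ : z ∈ C ∧ p ∉ seg h x z), ball z (dist p z) with hU
  set V : Set T := ⋃ (z : T) (_ : z ∈ C ∧ p ∈ seg h x z), ball z (dist p z) with hV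
  have hUo : IsOpen U := isOpen_iUnion fun z => isOpen_iUnion fun _ => isOpen_ball
  have hVo : IsOpen V := isOpen_iUnion fun z => isOpen_iUnion fun _ => isOpen_ball
  have hcov : C ⊆ U ∪ V := by
    intro z hz
    by_cases hm : p ∈ seg h x z
    · exact Or.inr (mem_iUnion.2 ⟨z, mem_iUnion.2 ⟨⟨hz, hm⟩, mem_ball_self (hdp z hz)⟩⟩)
    · exact Or.inl (mem_iUnion.2 ⟨z, mem_iUnion.2 ⟨⟨hz, hm⟩, mem_ball_self (hdp z hz)⟩⟩)
  have hxU : (C ∩ U).Nonempty := by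
    refine ⟨x, hx, mem_iUnion.2 ⟨x, mem_iUnion.2 ⟨⟨hx, ?_⟩, mem_ball_self (hdp x hx)⟩⟩⟩
    rw [seg_self h x]
    rintro (rfl : p = x); exact hpC hx
  have hyV : (C ∩ V).Nonempty :=
    ⟨y, hy, mem_iUnion.2 ⟨y, mem_iUnion.2 ⟨⟨hy, hp⟩, mem_ball_self (hdp y hy)⟩⟩⟩
  obtain ⟨q, hqC, hqU, hqV⟩ := hC U V hUo hVo hcov hxU hyV
  obtain ⟨z₁, hz₁⟩ := mem_iUnion.1 hqU
  obtain ⟨⟨hz₁C, hz₁p⟩, hqb₁⟩ := mem_iUnion.1 hz₁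
  obtain ⟨z₂, hz₂⟩ := mem_iUnion.1 hqV
  obtain ⟨⟨hz₂C, hz₂p⟩, hqb₂⟩ := mem_iUnion.1 hz₂
  have h1 : p ∉ seg h x q := prop₁ z₁ q (by rw [dist_comm]; exact mem_ball.1 hqb₁) hz₁p
  have h2 : p ∈ seg h x q := prop₂ z₂ q (by rw [dist_comm]; exact mem_ball.1 hqb₂) hz₂p
  exact h1 h2

lemma isometry_image_seg (h : IsRTree T) (φ : T ≃ᵢ T) (x y : T) :
    φ '' seg h x y = seg h (φ x) (φ y) := by
  obtain ⟨a, b, hab, α, hc, hi, him, hea, heb⟩ := seg_isArc h x y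
  apply seg_eq h
  refine ⟨a, b, hab, φ ∘ α, φ.continuous.comp_continuousOn hc,
    fun s hs t ht hst => hi hs ht (φ.injective hst), ?_, ?_, ?_⟩
  · rw [image_comp, him]
  · simp [Function.comp, hea]
  · simp [Function.comp, heb]

lemma fix_seg (h : IsRTree T) (φ : T ≃ᵢ T) {x y : T} (hx : φ x = x) (hy : φ y = y) :
    ∀ z ∈ seg h x y, φ z = z := by
  have him : φ '' seg h x y = seg h x y := by
    rw [isometry_image_seg h φ x y, hx, hy]
  intro z hz
  obtain ⟨a, b, hab, α, hd, himg, hea, heb, _, _, _⟩ := seg_geo h x y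
  have hφz : φ z ∈ seg h x y := him ▸ mem_image_of_mem φ hz
  rw [← himg] at hz hφz
  obtain ⟨t, ht, rfl⟩ := hz
  obtain ⟨t', ht', het'⟩ := hφz
  have hdist : dist x (φ (α t)) = dist x (α t) := by
    conv_lhs => rw [← hx]
    exact φ.dist_eq x (α t)
  rw [← het'] at hdist ⊢
  have h1 := hd a ⟨le_rfl, hab⟩ t ht
  have h2 := hd a ⟨le_rfl, hab⟩ t' ht'
  rw [hea] at h1 h2
  have e1 : |a - t| = t - a := by rw [abs_of_nonpos (by linarith [ht.1])]; ring
  have e2 : |a - t'| = t' - a := by rw [abs_of_nonpos (by linarith [ht'.1])]; ring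
  rw [h1, e1] at hdist
  rw [h2, e2] at hdist
  have : t' = t := by linarith
  rw [this]

end RTreeAux

open RTreeAux in
/-- Every stable subtree of an ℝ-tree is contained in a unique maximal stable subtree. -/
theorem stable_subtree_subset_unique_maximal {T : Type*} [MetricSpace T] (h : IsRTree T)
    {G : Type*} [Group G] (ρ : G →* (T ≃ᵢ T)) (S : Set T)
    (hS : IsStableSubtree ρ S) :
    ∃! M : Set T, IsStableSubtree ρ M ∧ S ⊆ M ∧
      ∀ M' : Set T, IsStableSubtree ρ M' → M ⊆ M' → M' = M := by
  classical
  set 𝒮 : Set (Set T) := {A | IsStableSubtree ρ A ∧ S ⊆ A} with h𝒮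
  set M : Set T := ⋃₀ 𝒮 with hM
  obtain ⟨s₀, hs₀, s₁, hs₁, hss⟩ := hS.2.1
  have hS𝒮 : S ∈ 𝒮 := ⟨hS, subset_rfl⟩
  have hSM : S ⊆ M := fun z hz => ⟨S, hS𝒮, hz⟩
  have hfixA : ∀ A ∈ 𝒮, fixOf ρ A = fixOf ρ S :=
    fun A hA => (hA.1.2.2 S hA.2 hS.1 hS.2.1).symm
  have hMconn : IsConnected M :=
    ⟨⟨s₀, hSM hs₀⟩, isPreconnected_sUnion s₀ 𝒮 (fun A hA => hA.2 hs₀)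
      (fun A hA => hA.1.1.isPreconnected)⟩
  have hMnd : Nondegenerate M := ⟨s₀, hSM hs₀, s₁, hSM hs₁, hss⟩
  have hfixM : fixOf ρ M = fixOf ρ S := by
    apply Set.Subset.antisymm
    · exact fun g hg x hx => hg x (hSM hx)
    · intro g hg z hz
      obtain ⟨A, hA, hzA⟩ := hz
      rw [← hfixA A hA] at hg
      exact hg z hzA
  have key : ∀ S' : Set T, S' ⊆ M → IsConnected S' → Nondegenerate S' →
      fixOf ρ S' = fixOf ρ M := by
    intro S' hsub hconn hnd
    rw [hfixM]
    apply Set.Subset.antisymm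
    · intro g hg
      obtain ⟨x, hx, y, hy, hxy⟩ := hnd
      obtain ⟨A, hA, hxA⟩ := hsub hx
      obtain ⟨B, hB, hyB⟩ := hsub hy
      have hABconn : IsPreconnected (A ∪ B) :=
        IsPreconnected.union s₀ (hA.2 hs₀) (hB.2 hs₀) hA.1.1.isPreconnected
          hB.1.1.isPreconnected
      have hsegAB : seg h x y ⊆ A ∪ B :=
        seg_subset_of_preconnected h hABconn (Or.inl hxA) (Or.inr hyB)
      obtain ⟨a, b, hab, α, hgd, him, hea, heb, hba, hinj, hcont⟩ := seg_geo h x y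
      have hdxy : 0 < dist x y := dist_pos.2 hxy
      have haltb : a < b := by linarith
      have hfix : ∀ z ∈ seg h x y, ρ g z = z := fix_seg h (ρ g) (hg x hx) (hg y hy)
      -- find a nondegenerate subsegment inside a single member of the family
      obtain ⟨D, hD𝒮, t₁, t₂, ht₁, ht₂, hlt, hα₁, hα₂⟩ :
          ∃ D ∈ 𝒮, ∃ t₁ t₂ : ℝ, t₁ ∈ Icc a b ∧ t₂ ∈ Icc a b ∧ t₁ < t₂ ∧
            α t₁ ∈ D ∧ α t₂ ∈ D := by
        by_cases hcase : ∃ t ∈ Icc a b, a < t ∧ α t ∈ A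
        · obtain ⟨t, ht, hat, htA⟩ := hcase
          exact ⟨A, hA, a, t, ⟨le_rfl, hab⟩, ht, hat, hea ▸ hxA, htA⟩
        · push_neg at hcase
          refine ⟨B, hB, (a + b) / 2, b, ⟨by linarith, by linarith⟩, ⟨hab, le_rfl⟩,
            by linarith, ?_, heb ▸ hyB⟩
          have hmem : α ((a + b) / 2) ∈ A ∪ B := by
            apply hsegAB
            rw [← him]
            exact mem_image_of_mem α ⟨by linarith, by linarith⟩
          rcases hmem with hmA | hmB
          · exact absurd hmA (hcase _ ⟨by linarith, by linarith⟩ (by linarith))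
          · exact hmB
      set J := seg h (α t₁) (α t₂) with hJ
      have hJD : J ⊆ D := seg_subset_of_preconnected h hD𝒮.1.1.isPreconnected hα₁ hα₂
      have hd₁ : dist x (α t₁) = t₁ - a := by
        have := hgd a ⟨le_rfl, hab⟩ t₁ ht₁
        rw [hea] at this
        rw [this, abs_of_nonpos (by linarith [ht₁.1])]; ring
      have hd₂ : dist x (α t₂) = t₂ - a := by
        have := hgd a ⟨le_rfl, hab⟩ t₂ ht₂
        rw [hea] at this
        rw [this, abs_of_nonpos (by linarith [ht₂.1])]; ring
      have hd₁' : dist (α t₁) y = b - t₁ := by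
        have := hgd t₁ ht₁ b ⟨hab, le_rfl⟩
        rw [heb] at this
        rw [this, abs_of_nonpos (by linarith [ht₁.2])]; ring
      have hd₂' : dist (α t₂) y = b - t₂ := by
        have := hgd t₂ ht₂ b ⟨hab, le_rfl⟩
        rw [heb] at this
        rw [this, abs_of_nonpos (by linarith [ht₂.2])]; ring
      have hd₁₂ : dist (α t₁) (α t₂) = t₂ - t₁ := by
        rw [hgd t₁ ht₁ t₂ ht₂, abs_of_nonpos (by linarith)]; ring
      have hJseg : J ⊆ seg h x y := by
        intro z hz
        have hzd := dist_add_of_mem_seg h hz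
        rw [hd₁₂] at hzd
        apply mem_seg_of_dist h
        have htr1 := dist_triangle x (α t₁) z
        have htr2 := dist_triangle z (α t₂) y
        have htr3 := dist_triangle x z y
        linarith
      have hJconn : IsConnected J := seg_isConnected h (α t₁) (α t₂)
      have hJnd : Nondegenerate J := by
        refine ⟨α t₁, left_mem_seg h _ _, α t₂, right_mem_seg h _ _, ?_⟩
        intro heqa
        rw [heqa] at hd₁₂
        rw [dist_self] at hd₁₂
        linarith
      have hfixJ : g ∈ fixOf ρ J := fun z hz => hfix z (hJseg hz)
      have := hD𝒮.1.2.2 J hJD hJconn hJnd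
      rw [this, hfixA D hD𝒮] at hfixJ
      exact hfixJ
    · intro g hg z hz
      rw [← hfixM] at hg
      exact hg z (hsub hz)
  have hMstable : IsStableSubtree ρ M := ⟨hMconn, hMnd, key⟩
  refine ⟨M, ⟨hMstable, hSM, ?_⟩, ?_⟩
  · intro M' hM' hMM'
    have hM'𝒮 : M' ∈ 𝒮 := ⟨hM', hSM.trans hMM'⟩
    exact Set.Subset.antisymm (subset_sUnion_of_mem hM'𝒮) hMM'
  · rintro N ⟨hNs, hSN, hNmax⟩
    have hN𝒮 : N ∈ 𝒮 := ⟨hNs, hSN⟩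
    exact (hNmax M hMstable (subset_sUnion_of_mem hN𝒮)).symm
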